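/- Let (Ĵ_{n_i})_{i=1}^∞ be a decreasing sequence of characteristic intervals, i.e. Ĵ_{n_{i+1}} ⊆ Ĵ_{n_i} for all i. Then there exist κ ∈ (0,1) and a constant C_k, both depending only on k, such that |Ĵ_{n_i}| ≤ C_k κ^i |Ĵ_{n_1}| for all i ∈ ℕ. -/

import Mathlib

open MeasureTheory Set
open scoped ENNReal NNReal

noncomputable section

/-- The measure on the torus `𝕋`, identified with `[0,1)`. -/
def μ01 : Measure ℝ := volume.restrict (Set.Ico 0 1)

/-- `f` is a periodic (1-periodic) spline of order `k` with knot multiplicity function `m`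
(the knots are the points of `[0,1)` where `m` is nonzero, counted with multiplicity `m`).
We use the right-continuous representatives. -/
def IsPeriodicSpline (k : ℕ) (m : ℝ → ℕ) (f : ℝ → ℝ) : Prop :=
  (∀ x, f (x + 1) = f x) ∧
  (∀ a b : ℝ, (∀ x ∈ Set.Ioo a b, m (Int.fract x) = 0) →
    ∃ P : Polynomial ℝ, P.degree < (k : WithBot ℕ) ∧ ∀ x ∈ Set.Ioo a b, f x = P.eval x) ∧
  (∀ x : ℝ, m (Int.fract x) < k → ContDiffAt ℝ (k - 1 - m (Int.fract x)) f x) ∧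
  (∀ x : ℝ, ContinuousWithinAt f (Set.Ici x) x)

/-- A periodic knot sequence `(σ_j)_{j∈ℤ}` of period `n` (i.e. `σ_{j+n} = σ_j + 1`),
with `0 ≤ σ_0 ≤ ⋯ ≤ σ_{n-1} < 1` and knot multiplicities at most `k`. -/
structure PKnots (k n : ℕ) where
  σ : ℤ → ℝ
  mono : Monotone σ
  per : ∀ j, σ (j + (n : ℤ)) = σ j + 1
  sep : ∀ j, σ j < σ (j + (k : ℤ))
  lo : 0 ≤ σ 0
  hi : σ ((n : ℤ) - 1) < 1

variable {k n : ℕ}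

/-- multiplicity of a point `x` in the knot sequence. -/
def PKnots.mult (K : PKnots k n) (x : ℝ) : ℕ :=
  Set.ncard {j : ℤ | 0 ≤ j ∧ j < (n : ℤ) ∧ K.σ j = x}

def PKnots.IsSpline (K : PKnots k n) (f : ℝ → ℝ) : Prop :=
  IsPeriodicSpline k K.mult f

/-- length of the support of the `j`-th B-spline. -/
def PKnots.ν (K : PKnots k n) (j : ℤ) : ℝ := K.σ (j + (k : ℤ)) - K.σ j

/-- `(N_i)_{i∈ℤ}` is the family of `L^∞`-normalized periodic B-splines of order `k`:
each `N_i` is a spline, the family is `n`-periodic in the index, `N_i` is nonnegative and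
nonzero, `N_i` is supported (as a function on the torus) in `[σ_i, σ_{i+k}]`, and the
family forms a partition of unity. -/
def IsBSplineFamily (K : PKnots k n) (N : ℤ → ℝ → ℝ) : Prop :=
  (∀ i, K.IsSpline (N i)) ∧
  (∀ i, N (i + (n : ℤ)) = N i) ∧
  (∀ i x, 0 ≤ N i x) ∧
  (∀ i, ∃ x, N i x ≠ 0) ∧
  (∀ i x, N i x ≠ 0 → ∃ r : ℤ, x + (r : ℝ) ∈ Set.Icc (K.σ i) (K.σ (i + (k : ℤ)))) ∧
  (∀ x, ∑ i ∈ Finset.Ico (0 : ℤ) (n : ℤ), N i x = 1)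

/-- `(Nd_i)` is the dual basis (inside the periodic spline space) to the B-spline family
`(N_i)`, biorthogonal in `L²(𝕋)`. -/
def IsDualFamily (K : PKnots k n) (N Nd : ℤ → ℝ → ℝ) : Prop :=
  (∀ i, K.IsSpline (Nd i)) ∧
  (∀ i, Nd (i + (n : ℤ)) = Nd i) ∧
  (∀ i j : ℤ, i ∈ Finset.Ico (0 : ℤ) (n : ℤ) → j ∈ Finset.Ico (0 : ℤ) (n : ℤ) →
    ∫ x in Set.Ico (0 : ℝ) 1, Nd i x * N j x = if i = j then 1 else 0)

/-- the coefficients `α̂_j` of the periodic orthogonal spline function corresponding to the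
removal of the knot `σ_{i0}`. -/
def alphaHat (K : PKnots k n) (i0 j : ℤ) : ℝ :=
  (-1 : ℝ) ^ (j - i0 + (k : ℤ)) *
    (∏ ℓ ∈ Finset.Ico (i0 - (k : ℤ) + 1) j, (K.σ i0 - K.σ ℓ) / (K.σ (ℓ + (k : ℤ)) - K.σ ℓ)) *
    (∏ ℓ ∈ Finset.Ico (j + 1) i0, (K.σ (ℓ + (k : ℤ)) - K.σ i0) / (K.σ (ℓ + (k : ℤ)) - K.σ ℓ))

/-- the periodic orthogonal spline function `ĝ = Σ_{j=i0-k}^{i0} α̂_j N̂_j^*`. -/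
def gHat (K : PKnots k n) (Nd : ℤ → ℝ → ℝ) (i0 : ℤ) : ℝ → ℝ :=
  fun x => ∑ j ∈ Finset.Icc (i0 - (k : ℤ)) i0, alphaHat K i0 j * Nd j x

/-- `[A,B]` is a characteristic interval corresponding to the knot `σ_{i0}`. -/
def IsCharInterval (K : PKnots k n) (i0 : ℤ) (A B : ℝ) : Prop :=
  ∃ j0 ∈ Finset.Icc (i0 - (k : ℤ)) i0,
    (∀ ℓ ∈ Finset.Icc (i0 - (k : ℤ)) i0, K.ν j0 ≤ 2 * K.ν ℓ) ∧
    (∀ j ∈ Finset.Icc (i0 - (k : ℤ)) i0,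
      (∀ ℓ ∈ Finset.Icc (i0 - (k : ℤ)) i0, K.ν j ≤ 2 * K.ν ℓ) →
      |alphaHat K i0 j| ≤ |alphaHat K i0 j0|) ∧
    ∃ l0 : ℕ, l0 < k ∧
      (∀ l : ℕ, l < k →
        K.σ (j0 + (l : ℤ) + 1) - K.σ (j0 + (l : ℤ)) ≤ K.σ (j0 + (l0 : ℤ) + 1) - K.σ (j0 + (l0 : ℤ))) ∧
      A = K.σ (j0 + (l0 : ℤ)) ∧ B = K.σ (j0 + (l0 : ℤ) + 1)

/-- periodic distance of indices `i, j ∈ {0, …, n-1}`. -/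
def pdist (n : ℕ) (i j : ℤ) : ℕ := min (i - j).natAbs (n - (i - j).natAbs)

/-- The arc `[a,b]` (as an interval on the torus) contains the arcs `[A,B]` and `[A',B']`. -/
def ArcContains (a b A B A' B' : ℝ) : Prop :=
  (∃ r : ℤ, Set.Icc (A + (r : ℝ)) (B + (r : ℝ)) ⊆ Set.Icc a b) ∧
  (∃ r : ℤ, Set.Icc (A' + (r : ℝ)) (B' + (r : ℝ)) ⊆ Set.Icc a b)

/-- The arc `[a,b] ⊂ 𝕋` is minimal under inclusion among intervals of the torus
containing the arcs `[A,B]` and `[A',B']`. -/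
def IsMinArc (a b A B A' B' : ℝ) : Prop :=
  a ≤ b ∧ b - a ≤ 1 ∧ ArcContains a b A B A' B' ∧
  ∀ a' b' : ℝ, a' ≤ b' → (∃ r : ℤ, a ≤ a' + (r : ℝ) ∧ b' + (r : ℝ) ≤ b) →
    ArcContains a' b' A B A' B' → b - a ≤ b' - a'

/-- number of knots of the knot sequence (counted with multiplicity) lying on the
arc `[a,b]` of the torus. -/
def knotCount (K : PKnots k n) (a b : ℝ) : ℕ :=
  Set.ncard {j : ℤ | 0 ≤ j ∧ j < (n : ℤ) ∧ ∃ r : ℤ, K.σ j + (r : ℝ) ∈ Set.Icc a b}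

/-- the subset of `[0,1)` corresponding to the arc `[a,b]` of the torus. -/
def arcSet (a b : ℝ) : Set ℝ := {x | x ∈ Set.Ico (0 : ℝ) 1 ∧ ∃ r : ℤ, x + (r : ℝ) ∈ Set.Icc a b}

/-- the subset of `[0,1)` corresponding to the open arc `(a,b)` of the torus. -/
def arcSetO (a b : ℝ) : Set ℝ := {x | x ∈ Set.Ico (0 : ℝ) 1 ∧ ∃ r : ℤ, x + (r : ℝ) ∈ Set.Ioo a b}

/-- the non-periodic partition of `[0,1]` obtained from the splitting of a periodic
partition at `0`: boundary knots get multiplicity `k`. -/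
def tauOf (K : PKnots k n) : ℤ → ℝ :=
  fun j => if j < 0 then 0 else if j < (n : ℤ) then K.σ j else 1

/-- the coefficients `α_j` of the non-periodic orthogonal spline function corresponding
to the knots `tauOf K` and the removal of `τ_{i0}`. -/
def alphaNP (K : PKnots k n) (i0 j : ℤ) : ℝ :=
  (-1 : ℝ) ^ (j - i0 + (k : ℤ)) *
    (∏ ℓ ∈ Finset.Ico (i0 - (k : ℤ) + 1) j,
      (tauOf K i0 - tauOf K ℓ) / (tauOf K (ℓ + (k : ℤ)) - tauOf K ℓ)) *
    (∏ ℓ ∈ Finset.Ico (j + 1) i0,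
      (tauOf K (ℓ + (k : ℤ)) - tauOf K i0) / (tauOf K (ℓ + (k : ℤ)) - tauOf K ℓ))

/-- the periodic partition is normalized so that the splitting at `0` is the maximal
splitting: `σ_0 = 1 - σ_{n-1} = (1/2) max_j (σ_j - σ_{j-1})`. -/
def IsMaxSplit (K : PKnots k n) : Prop :=
  (∀ j ∈ Finset.Ico (0 : ℤ) (n : ℤ), K.σ j - K.σ (j - 1) ≤ 2 * K.σ 0) ∧
  (∃ j ∈ Finset.Ico (0 : ℤ) (n : ℤ), K.σ j - K.σ (j - 1) = 2 * K.σ 0) ∧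
  1 - K.σ ((n : ℤ) - 1) = K.σ 0

/-- `[A,B]` is a characteristic interval for the non-periodic partition `tauOf K`
corresponding to the knot `τ_{i0}`. -/
def IsCharIntervalNP (K : PKnots k n) (i0 : ℤ) (A B : ℝ) : Prop :=
  ∃ j0 ∈ Finset.Icc (i0 - (k : ℤ)) i0,
    (∀ ℓ ∈ Finset.Icc (i0 - (k : ℤ)) i0,
      tauOf K (j0 + (k : ℤ)) - tauOf K j0 ≤ 2 * (tauOf K (ℓ + (k : ℤ)) - tauOf K ℓ)) ∧
    (∀ j ∈ Finset.Icc (i0 - (k : ℤ)) i0,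
      (∀ ℓ ∈ Finset.Icc (i0 - (k : ℤ)) i0,
        tauOf K (j + (k : ℤ)) - tauOf K j ≤ 2 * (tauOf K (ℓ + (k : ℤ)) - tauOf K ℓ)) →
      |alphaNP K i0 j| ≤ |alphaNP K i0 j0|) ∧
    ∃ l0 : ℕ, l0 < k ∧
      (∀ l : ℕ, l < k →
        tauOf K (j0 + (l : ℤ) + 1) - tauOf K (j0 + (l : ℤ)) ≤
          tauOf K (j0 + (l0 : ℤ) + 1) - tauOf K (j0 + (l0 : ℤ))) ∧
      A = tauOf K (j0 + (l0 : ℤ)) ∧ B = tauOf K (j0 + (l0 : ℤ) + 1)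

/-- `s` is an admissible sequence of knots in the torus `𝕋 = [0,1)`: dense and each point
occurs at most `k` times. -/
def IsAdmissible (k : ℕ) (s : ℕ → ℝ) : Prop :=
  (∀ n, s n ∈ Set.Ico (0 : ℝ) 1) ∧
  (∀ x ∈ Set.Icc (0 : ℝ) 1, ∀ ε > 0, ∃ n, |s n - x| < ε) ∧
  (∀ x : ℝ, ∀ F : Finset ℕ, (∀ m ∈ F, s m = x) → F.card ≤ k)

/-- `K` is the increasing enumeration of the first `n` points `s_0, …, s_{n-1}`. -/
def Enumerates (s : ℕ → ℝ) (n : ℕ) (K : PKnots k n) : Prop :=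
  ∀ x : ℝ, {j : ℤ | 0 ≤ j ∧ j < (n : ℤ) ∧ K.σ j = x}.ncard = {m : ℕ | m < n ∧ s m = x}.ncard

/-- `[A n, B n]` is a characteristic interval `Ĵ_n` corresponding to the new knot
`s_{n-1}` in the partition formed by `s_0, …, s_{n-1}` (for every `n ≥ 2k`). -/
def HasCharIntervals (k : ℕ) (s : ℕ → ℝ) (A B : ℕ → ℝ) : Prop :=
  ∀ n : ℕ, 2 * k ≤ n → ∃ K : PKnots k n, Enumerates s n K ∧
    ∃ i0 : ℤ, 0 ≤ i0 ∧ i0 < (n : ℤ) ∧ K.σ i0 = s (n - 1) ∧ IsCharInterval K i0 (A n) (B n)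

/-- the multiplicity function of the knot set `{s_0, …, s_{n-1}}`. -/
def multUpTo (s : ℕ → ℝ) (n : ℕ) (x : ℝ) : ℕ := {m : ℕ | m < n ∧ s m = x}.ncard

/-- `(f_n)_{n ≥ 1}` is the periodic orthonormal spline system of order `k` corresponding to
the point sequence `(s_j)_{j ≥ 0}`:  `(f_n)_{n=1}^k` is an orthonormal basis of the spline
space on the knots `s_0, …, s_{k-1}`, and for `n ≥ k+1`, `f_n` is a unit vector in the spline
space on `s_0, …, s_{n-1}` orthogonal to the spline space on `s_0, …, s_{n-2}`. -/
def IsONSplineSystem (k : ℕ) (s : ℕ → ℝ) (f : ℕ → ℝ → ℝ) : Prop :=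
  (∀ m n : ℕ, 1 ≤ m → 1 ≤ n →
    ∫ x in Set.Ico (0 : ℝ) 1, f m x * f n x = if m = n then 1 else 0) ∧
  (∀ n, 1 ≤ n → n ≤ k → IsPeriodicSpline k (multUpTo s k) (f n)) ∧
  (∀ g : ℝ → ℝ, IsPeriodicSpline k (multUpTo s k) g →
    ∃ c : ℕ → ℝ, ∀ x, g x = ∑ i ∈ Finset.Icc 1 k, c i * f i x) ∧
  (∀ n, k + 1 ≤ n → IsPeriodicSpline k (multUpTo s n) (f n) ∧
    (∀ g : ℝ → ℝ, IsPeriodicSpline k (multUpTo s (n - 1)) g →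
      ∫ x in Set.Ico (0 : ℝ) 1, f n x * g x = 0))

end

section Aux

open scoped Classical

variable {k n : ℕ}

lemma sigma_add_mul (K : PKnots k n) (j : ℤ) (r : ℤ) :
    K.σ (j + r * n) = K.σ j + r := by
  induction r using Int.induction_on with
  | zero => simp
  | succ m ih =>
      have h := K.per (j + (m : ℤ) * n)
      have e : j + ((m : ℤ) + 1) * n = j + (m : ℤ) * n + n := by ring
      rw [e, h, ih]; push_cast; ring
  | pred m ih =>
      have h := K.per (j + (-(m : ℤ) - 1) * n)
      have e : j + (-(m : ℤ) - 1) * n + (n : ℤ) = j + (-(m : ℤ)) * n := by ring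
      rw [e] at h
      have e2 : K.σ (j + (-(m : ℤ) - 1) * n) = K.σ (j + (-(m : ℤ)) * n) - 1 := by linarith
      rw [e2, ih]; push_cast; ring

/-- Counting lemma: the number of points `s_m`, `m < n`, lying (mod 1) in an open
interval which contains (as knot indices) only indices strictly between `i0 - k` and
`i0 + k`, is at most `2k - 1`. -/
lemma count_le_window (K : PKnots k n) (s : ℕ → ℝ)
    (hs : ∀ m, s m ∈ Set.Ico (0 : ℝ) 1) (hE : Enumerates s n K)
    (c d : ℝ) (i0 : ℤ)
    (hT : ∀ ℓ : ℤ, K.σ ℓ ∈ Set.Ioo c d → ℓ ∈ Finset.Ioo (i0 - (k : ℤ)) (i0 + (k : ℤ))) :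
    ((Finset.range n).filter (fun m => ∃ r : ℤ, s m + (r : ℝ) ∈ Set.Ioo c d)).card
      ≤ 2 * k - 1 := by
  classical
  set S := (Finset.range n).filter (fun m => ∃ r : ℤ, s m + (r : ℝ) ∈ Set.Ioo c d) with hS
  set T := (Finset.Ioo (i0 - (k : ℤ)) (i0 + (k : ℤ))).filter (fun ℓ => K.σ ℓ ∈ Set.Ioo c d)
    with hTdef
  have hTcard : T.card ≤ 2 * k - 1 := by
    calc T.card ≤ (Finset.Ioo (i0 - (k : ℤ)) (i0 + (k : ℤ))).card := Finset.card_filter_le _ _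
      _ = 2 * k - 1 := by rw [Int.card_Ioo]; omega
  set V := S.image s with hV
  have hSsum : S.card = ∑ x ∈ V, (S.filter (fun m => s m = x)).card :=
    Finset.card_eq_sum_card_fiberwise (fun m hm => Finset.mem_image_of_mem s hm)
  have hfib : ∀ x ∈ V, (S.filter (fun m => s m = x)).card
      ≤ (T.filter (fun ℓ => Int.fract (K.σ ℓ) = x)).card := by
    intro x hx
    obtain ⟨m0, hm0S, hm0x⟩ := Finset.mem_image.mp hx
    obtain ⟨r, hr⟩ : ∃ r : ℤ, x + (r : ℝ) ∈ Set.Ioo c d := by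
      have h := (Finset.mem_filter.mp hm0S).2
      rw [hm0x] at h; exact h
    have hx01 : x ∈ Set.Ico (0 : ℝ) 1 := hm0x ▸ hs m0
    have e1 : S.filter (fun m => s m = x) = (Finset.range n).filter (fun m => s m = x) := by
      ext m
      simp only [hS, Finset.mem_filter, Finset.mem_range]
      constructor
      · rintro ⟨⟨h1, _⟩, h3⟩; exact ⟨h1, h3⟩
      · rintro ⟨h1, h3⟩; exact ⟨⟨h1, ⟨r, by rw [h3]; exact hr⟩⟩, h3⟩
    rw [e1]
    have e2 : ((Finset.range n).filter (fun m => s m = x)).card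
        = ((Finset.Ico (0 : ℤ) (n : ℤ)).filter (fun j => K.σ j = x)).card := by
      have h1 : {m : ℕ | m < n ∧ s m = x}
          = (((Finset.range n).filter (fun m => s m = x) : Finset ℕ) : Set ℕ) := by
        ext m; simp [Finset.mem_filter]
      have h2 : {j : ℤ | 0 ≤ j ∧ j < (n : ℤ) ∧ K.σ j = x}
          = (((Finset.Ico (0 : ℤ) (n : ℤ)).filter (fun j => K.σ j = x) : Finset ℤ) : Set ℤ) := by
        ext j
        simp only [Set.mem_setOf_eq, Finset.coe_filter, Finset.mem_Ico]
        tauto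
      have h3 := hE x
      rw [h1, h2, Set.ncard_coe_finset, Set.ncard_coe_finset] at h3
      omega
    rw [e2]
    apply Finset.card_le_card_of_injOn (fun j => j + r * n)
    · intro j hj
      obtain ⟨hj1, hjx⟩ := Finset.mem_filter.mp hj
      have hσ : K.σ (j + r * n) = x + r := by rw [sigma_add_mul, hjx]
      have hio : K.σ (j + r * n) ∈ Set.Ioo c d := by rw [hσ]; exact hr
      refine Finset.mem_filter.mpr ⟨Finset.mem_filter.mpr ⟨hT _ hio, hio⟩, ?_⟩
      rw [hσ, Int.fract_add_intCast]
      exact Int.fract_eq_self.mpr ⟨hx01.1, hx01.2⟩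
    · intro a _ b _ h
      simpa using h
  have hTsum : ∑ x ∈ V, (T.filter (fun ℓ => Int.fract (K.σ ℓ) = x)).card ≤ T.card := by
    rw [← Finset.card_biUnion]
    · exact Finset.card_le_card (Finset.biUnion_subset.mpr fun x _ => Finset.filter_subset _ _)
    · intro x _ y _ hxy
      rw [Function.onFun_apply, Finset.disjoint_left]
      intro ℓ h1 h2
      have e1 := (Finset.mem_filter.mp h1).2
      have e2 := (Finset.mem_filter.mp h2).2
      exact hxy (by rw [← e1, ← e2])
  calc S.card = ∑ x ∈ V, (S.filter (fun m => s m = x)).card := hSsum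
    _ ≤ ∑ x ∈ V, (T.filter (fun ℓ => Int.fract (K.σ ℓ) = x)).card := Finset.sum_le_sum hfib
    _ ≤ T.card := hTsum
    _ ≤ 2 * k - 1 := hTcard

/-- Basic facts about a characteristic interval. -/
lemma char_facts (hk : 0 < k) (hn : 1 ≤ n) {K : PKnots k n}
    {i0 : ℤ} {A B : ℝ} (h : IsCharInterval K i0 A B) :
    A ≤ B ∧ 0 < B - A ∧ B - A ≤ 1 ∧
    A - k * (B - A) ≤ K.σ i0 ∧ K.σ i0 ≤ B + k * (B - A) ∧
    K.σ i0 + (B - A) / 2 ≤ K.σ (i0 + k) ∧ K.σ (i0 - k) ≤ K.σ i0 - (B - A) / 2 := by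
  obtain ⟨j0, hj0, hcomp, -, l0, hl0, hmax, hA, hB⟩ := h
  obtain ⟨hj0a, hj0b⟩ := Finset.mem_Icc.mp hj0
  have hmono := K.mono
  have hAB : A ≤ B := by rw [hA, hB]; exact hmono (by omega)
  have htel : ∑ l ∈ Finset.range k, (K.σ (j0 + (l : ℤ) + 1) - K.σ (j0 + (l : ℤ)))
      = K.σ (j0 + (k : ℤ)) - K.σ j0 := by
    have h := Finset.sum_range_sub (fun l : ℕ => K.σ (j0 + (l : ℤ))) k
    push_cast [← add_assoc] at h
    simpa using h
  have hνle : K.σ (j0 + (k : ℤ)) - K.σ j0 ≤ (k : ℝ) * (B - A) := by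
    rw [← htel]
    calc ∑ l ∈ Finset.range k, (K.σ (j0 + (l : ℤ) + 1) - K.σ (j0 + (l : ℤ)))
        ≤ ∑ _l ∈ Finset.range k, (B - A) := by
          apply Finset.sum_le_sum
          intro l hl
          have := hmax l (Finset.mem_range.mp hl)
          rw [hA, hB]; linarith
      _ = (k : ℝ) * (B - A) := by
          rw [Finset.sum_const, Finset.card_range, nsmul_eq_mul]
  have hνge : B - A ≤ K.σ (j0 + (k : ℤ)) - K.σ j0 := by
    rw [hA, hB]
    have h1 : K.σ (j0 + (l0 : ℤ) + 1) ≤ K.σ (j0 + (k : ℤ)) := hmono (by omega)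
    have h2 : K.σ j0 ≤ K.σ (j0 + (l0 : ℤ)) := hmono (by omega)
    linarith
  have hνpos : 0 < K.σ (j0 + (k : ℤ)) - K.σ j0 := sub_pos.mpr (K.sep j0)
  have hLpos : 0 < B - A := by
    by_contra hc
    push_neg at hc
    have hk' : (0 : ℝ) < k := by exact_mod_cast hk
    nlinarith
  have hL1 : B - A ≤ 1 := by
    have hper := K.per (j0 + (l0 : ℤ))
    have h1 : K.σ (j0 + (l0 : ℤ) + 1) ≤ K.σ (j0 + (l0 : ℤ) + n) := hmono (by omega)
    rw [hA, hB]
    linarith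
  have hc1 := hcomp i0 (Finset.mem_Icc.mpr ⟨by omega, le_refl i0⟩)
  have hc2 := hcomp (i0 - k) (Finset.mem_Icc.mpr ⟨le_refl _, by omega⟩)
  simp only [PKnots.ν] at hc1 hc2
  have e : i0 - (k : ℤ) + k = i0 := by ring
  rw [e] at hc2
  have hσ1 : K.σ j0 ≤ K.σ i0 := hmono (by omega)
  have hσ2 : K.σ i0 ≤ K.σ (j0 + (k : ℤ)) := hmono (by omega)
  have hσ3 : K.σ (j0 + (l0 : ℤ)) ≤ K.σ (j0 + (k : ℤ)) := hmono (by omega)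
  have hσ4 : K.σ j0 ≤ K.σ (j0 + (l0 : ℤ)) := hmono (by omega)
  refine ⟨hAB, hLpos, hL1, by linarith, by linarith, by linarith, by linarith⟩

end Aux

/-- **Geometric decay of nested characteristic intervals.**  If `(Ĵ_{n_i})_{i ≥ 1}` is a
decreasing sequence of characteristic intervals, then `|Ĵ_{n_i}| ≤ C_k κ^i |Ĵ_{n_1}|`
with `κ ∈ (0,1)` and `C_k` depending only on `k`. -/
theorem stmt15 (k : ℕ) (hk : 0 < k) :
    ∃ κ C : ℝ, 0 < κ ∧ κ < 1 ∧ 0 < C ∧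
    ∀ s : ℕ → ℝ, IsAdmissible k s →
    ∀ A B : ℕ → ℝ, HasCharIntervals k s A B →
    ∀ idx : ℕ → ℕ, StrictMono idx → (∀ i, 2 * k ≤ idx i) →
      (∀ i, 1 ≤ i →
        ∃ r : ℤ, Set.Icc (A (idx (i + 1)) + (r : ℝ)) (B (idx (i + 1)) + (r : ℝ)) ⊆
          Set.Icc (A (idx i)) (B (idx i))) →
      ∀ i : ℕ, 1 ≤ i →
        B (idx i) - A (idx i) ≤ C * κ ^ i * (B (idx 1) - A (idx 1)) := by
  classical
  set D : ℕ := 2 * k * (8 * k + 5) with hD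
  have hDpos : 0 < D := by positivity
  refine ⟨(2 : ℝ) ^ (-(D : ℝ)⁻¹), 4, Real.rpow_pos_of_pos two_pos _, ?_, by norm_num, ?_⟩
  · apply Real.rpow_lt_one_of_one_lt_of_neg one_lt_two
    have : (0 : ℝ) < (D : ℝ)⁻¹ := by positivity
    linarith
  intro s hs A B hAB idx hidx hidx2k hnest i hi
  obtain ⟨Lf, hLf⟩ : ∃ Lf : ℕ → ℝ, ∀ j, Lf j = B (idx j) - A (idx j) := ⟨_, fun _ => rfl⟩
  have Hfact : ∀ j : ℕ, A (idx j) ≤ B (idx j) ∧ 0 < Lf j ∧ Lf j ≤ 1 ∧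
      A (idx j) - k * Lf j ≤ s (idx j - 1) ∧ s (idx j - 1) ≤ B (idx j) + k * Lf j := by
    intro j
    obtain ⟨K, hE, i0, h1, h2, h3, hchar⟩ := hAB (idx j) (hidx2k j)
    have hf := char_facts hk (show 1 ≤ idx j by have := hidx2k j; omega) hchar
    rw [h3] at hf
    rw [hLf j]
    exact ⟨hf.1, hf.2.1, hf.2.2.1, hf.2.2.2.1, hf.2.2.2.2.1⟩
  have Hcount : ∀ j : ℕ,
      ((Finset.range (idx j)).filter (fun m => ∃ r : ℤ, s m + (r : ℝ) ∈
        Set.Ioo (s (idx j - 1) - Lf j / 2) (s (idx j - 1) + Lf j / 2))).card ≤ 2 * k - 1 := by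
    intro j
    obtain ⟨K, hE, i0, h1, h2, h3, hchar⟩ := hAB (idx j) (hidx2k j)
    have hf := char_facts hk (show 1 ≤ idx j by have := hidx2k j; omega) hchar
    rw [← h3]
    apply count_le_window K s hs.1 hE _ _ i0
    intro ℓ hℓ
    obtain ⟨hℓ1, hℓ2⟩ := hℓ
    have h6 := hf.2.2.2.2.2.1
    have h7 := hf.2.2.2.2.2.2
    have hLfj := hLf j
    rw [Finset.mem_Ioo]
    constructor
    · by_contra hc
      push_neg at hc
      have := K.mono hc
      linarith
    · by_contra hc
      push_neg at hc
      have := K.mono hc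
      linarith
  have Hnest : ∀ a : ℕ, 1 ≤ a → ∀ j : ℕ, a ≤ j →
      ∃ R : ℤ, A (idx a) ≤ A (idx j) + R ∧ B (idx j) + R ≤ B (idx a) := by
    intro a ha j hj
    induction j, hj using Nat.le_induction with
    | base => exact ⟨0, by simp⟩
    | succ j hj ih =>
        obtain ⟨R, hR1, hR2⟩ := ih
        obtain ⟨r, hr⟩ := hnest j (le_trans ha hj)
        have hne : A (idx (j + 1)) + (r : ℝ) ≤ B (idx (j + 1)) + (r : ℝ) := by
          have := (Hfact (j + 1)).1; linarith
        have h1 := hr (Set.left_mem_Icc.mpr hne)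
        have h2 := hr (Set.right_mem_Icc.mpr hne)
        rw [Set.mem_Icc] at h1 h2
        refine ⟨R + r, ?_, ?_⟩ <;> push_cast <;> linarith
  have HLmono : ∀ a : ℕ, 1 ≤ a → ∀ j : ℕ, a ≤ j → Lf j ≤ Lf a := by
    intro a ha j hj
    obtain ⟨R, h1, h2⟩ := Hnest a ha j hj
    rw [hLf j, hLf a]
    linarith
  have Hhalf : ∀ a : ℕ, 1 ≤ a → Lf (a + D) ≤ Lf a / 2 := by
    intro a ha
    by_contra hcon
    push_neg at hcon
    have hLpos : 0 < Lf a := (Hfact a).2.1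
    have hRex : ∀ j : ℕ, ∃ R : ℤ, a ≤ j →
        (A (idx a) ≤ A (idx j) + R ∧ B (idx j) + R ≤ B (idx a)) := by
      intro j
      by_cases h : a ≤ j
      · obtain ⟨R, hR⟩ := Hnest a ha j h
        exact ⟨R, fun _ => hR⟩
      · exact ⟨0, fun hc => absurd hc h⟩
    choose R hR using hRex
    obtain ⟨q, hq⟩ : ∃ q : ℕ → ℝ, ∀ j, q j = s (idx j - 1) + (R j : ℝ) := ⟨_, fun _ => rfl⟩
    obtain ⟨lo, hlo⟩ : ∃ lo : ℝ, lo = A (idx a) - k * Lf a := ⟨_, rfl⟩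
    obtain ⟨t, htdef⟩ : ∃ t : ℕ → ℕ, ∀ j, t j = (⌊(q j - lo) * 4 / Lf a⌋).toNat :=
      ⟨_, fun _ => rfl⟩
    have hqmem : ∀ j ∈ Finset.Ioc a (a + D), lo ≤ q j ∧ q j ≤ B (idx a) + k * Lf a := by
      intro j hj
      obtain ⟨hj1, hj2⟩ := Finset.mem_Ioc.mp hj
      obtain ⟨hR1, hR2⟩ := hR j (le_of_lt hj1)
      obtain ⟨-, hLjpos, -, hp1, hp2⟩ := Hfact j
      have hLle : Lf j ≤ Lf a := HLmono a ha j (le_of_lt hj1)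
      have hmul : (k : ℝ) * Lf j ≤ (k : ℝ) * Lf a :=
        mul_le_mul_of_nonneg_left hLle (Nat.cast_nonneg k)
      constructor
      · rw [hq j, hlo]; linarith
      · rw [hq j]; linarith
    have hmaps : ∀ j ∈ Finset.Ioc a (a + D), t j ∈ Finset.range (8 * k + 5) := by
      intro j hj
      obtain ⟨h1, h2⟩ := hqmem j hj
      have hx1 : (q j - lo) * 4 / Lf a ≤ 8 * (k : ℝ) + 4 := by
        rw [div_le_iff₀ hLpos]
        have hLfa := hLf a
        linarith
      have hfl : ⌊(q j - lo) * 4 / Lf a⌋ ≤ (8 * (k : ℤ) + 4) := by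
        have hcast : ((8 * (k : ℤ) + 4 : ℤ) : ℝ) = 8 * (k : ℝ) + 4 := by push_cast; ring
        calc ⌊(q j - lo) * 4 / Lf a⌋ ≤ ⌊((8 * (k : ℤ) + 4 : ℤ) : ℝ)⌋ :=
              Int.floor_mono (by rw [hcast]; exact hx1)
          _ = 8 * (k : ℤ) + 4 := Int.floor_intCast _
      rw [Finset.mem_range, htdef j]
      omega
    have hcard : (Finset.range (8 * k + 5)).card * (2 * k - 1) < (Finset.Ioc a (a + D)).card := by
      rw [Finset.card_range, Nat.card_Ioc, Nat.add_sub_cancel_left, hD]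
      calc (8 * k + 5) * (2 * k - 1) < (8 * k + 5) * (2 * k) :=
            mul_lt_mul_of_pos_left (by omega) (by omega)
        _ = 2 * k * (8 * k + 5) := by ring
    obtain ⟨b, hb, hbcard⟩ :=
      Finset.exists_lt_card_fiber_of_mul_lt_card_of_maps_to hmaps hcard
    set F := (Finset.Ioc a (a + D)).filter (fun j => t j = b) with hF
    have hFne : F.Nonempty := Finset.card_pos.mp (by omega)
    set j0 := F.max' hFne with hj0def
    have hj0F : j0 ∈ F := F.max'_mem hFne
    have hj0Ioc := (Finset.mem_filter.mp hj0F).1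
    have hj0a : a < j0 := (Finset.mem_Ioc.mp hj0Ioc).1
    have hLj0 : Lf a / 2 < Lf j0 :=
      lt_of_lt_of_le hcon (HLmono j0 (by omega) (a + D) (Finset.mem_Ioc.mp hj0Ioc).2)
    have hfl_nonneg : ∀ j ∈ Finset.Ioc a (a + D), 0 ≤ ⌊(q j - lo) * 4 / Lf a⌋ := by
      intro j hj
      apply Int.floor_nonneg.mpr
      have := (hqmem j hj).1
      apply div_nonneg (by linarith) hLpos.le
    have hinj : F.card ≤ ((Finset.range (idx j0)).filter (fun m => ∃ r : ℤ, s m + (r : ℝ) ∈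
        Set.Ioo (s (idx j0 - 1) - Lf j0 / 2) (s (idx j0 - 1) + Lf j0 / 2))).card := by
      apply Finset.card_le_card_of_injOn (fun l => idx l - 1)
      · intro l hl
        obtain ⟨hlIoc, hlb⟩ := Finset.mem_filter.mp hl
        have hlj0 : l ≤ j0 := F.le_max' l hl
        have hidxl : 2 * k ≤ idx l := hidx2k l
        have hmono_idx : idx l ≤ idx j0 := hidx.monotone hlj0
        refine Finset.mem_filter.mpr ⟨Finset.mem_range.mpr (by dsimp only; omega), ⟨R l - R j0, ?_⟩⟩
        have hbj0 : t j0 = b := (Finset.mem_filter.mp hj0F).2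
        have heq : ⌊(q l - lo) * 4 / Lf a⌋ = ⌊(q j0 - lo) * 4 / Lf a⌋ := by
          have h1 := hfl_nonneg l hlIoc
          have h2 := hfl_nonneg j0 hj0Ioc
          have h3 : t l = t j0 := by rw [hlb, hbj0]
          rw [htdef l, htdef j0] at h3
          omega
        have habs1 : q l - q j0 < Lf a / 4 := by
          have h2 := Int.lt_floor_add_one ((q l - lo) * 4 / Lf a)
          have h3 := Int.floor_le ((q j0 - lo) * 4 / Lf a)
          rw [heq] at h2
          have hd1 : (q l - lo) * 4 / Lf a - (q j0 - lo) * 4 / Lf a < 1 := by linarith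
          have e : (q l - lo) * 4 / Lf a - (q j0 - lo) * 4 / Lf a
              = (q l - q j0) * 4 / Lf a := by ring
          rw [e, div_lt_iff₀ hLpos] at hd1
          linarith
        have habs2 : q j0 - q l < Lf a / 4 := by
          have h1 := Int.floor_le ((q l - lo) * 4 / Lf a)
          have h4 := Int.lt_floor_add_one ((q j0 - lo) * 4 / Lf a)
          rw [heq] at h1
          have hd2 : (q j0 - lo) * 4 / Lf a - (q l - lo) * 4 / Lf a < 1 := by linarith
          have e : (q j0 - lo) * 4 / Lf a - (q l - lo) * 4 / Lf a
              = (q j0 - q l) * 4 / Lf a := by ring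
          rw [e, div_lt_iff₀ hLpos] at hd2
          linarith
        have hval : s (idx l - 1) + ((R l - R j0 : ℤ) : ℝ) = q l - R j0 := by
          rw [hq l]; push_cast; ring
        rw [hval, Set.mem_Ioo]
        have hqj0 : q j0 = s (idx j0 - 1) + (R j0 : ℝ) := hq j0
        constructor <;> linarith
      · intro x hx y hy hxy
        simp only at hxy
        have h1 : 1 ≤ idx x := by have := hidx2k x; omega
        have h2 : 1 ≤ idx y := by have := hidx2k y; omega
        exact hidx.injective (by omega)
    have := Hcount j0
    omega
  have Hgeo : ∀ m : ℕ, Lf (1 + D * m) ≤ (1 / 2 : ℝ) ^ m * Lf 1 := by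
    intro m
    induction m with
    | zero => simp
    | succ m ih =>
        have h1 : 1 + D * (m + 1) = (1 + D * m) + D := by ring
        rw [h1]
        have h2 := Hhalf (1 + D * m) (Nat.le_add_right 1 (D * m))
        calc Lf ((1 + D * m) + D) ≤ Lf (1 + D * m) / 2 := h2
          _ ≤ ((1 / 2 : ℝ) ^ m * Lf 1) / 2 := by linarith
          _ = (1 / 2 : ℝ) ^ (m + 1) * Lf 1 := by ring
  obtain ⟨m, hmdef⟩ : ∃ m : ℕ, m = (i - 1) / D := ⟨_, rfl⟩
  have hmod : D * m + (i - 1) % D = i - 1 := by rw [hmdef]; exact Nat.div_add_mod (i - 1) D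
  have hQlt : (i - 1) % D < D := Nat.mod_lt _ hDpos
  obtain ⟨P, hP⟩ : ∃ P : ℕ, P = D * m := ⟨_, rfl⟩
  obtain ⟨Q, hQ⟩ : ∃ Q : ℕ, Q = (i - 1) % D := ⟨_, rfl⟩
  rw [← hP, ← hQ] at hmod
  rw [← hQ] at hQlt
  have h1m : 1 + D * m ≤ i := by rw [← hP]; omega
  have hnat2 : i ≤ D * m + 2 * D := by rw [← hP]; omega
  have hLi : Lf i ≤ (1 / 2 : ℝ) ^ m * Lf 1 :=
    le_trans (HLmono (1 + D * m) (Nat.le_add_right 1 (D * m)) i h1m) (Hgeo m)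
  have hL1 : 0 < Lf 1 := (Hfact 1).2.1
  have hpow : ((1 : ℝ) / 2) ^ m ≤ 4 * ((2 : ℝ) ^ (-(D : ℝ)⁻¹)) ^ i := by
    have e1 : ((1 : ℝ) / 2) ^ m = (2 : ℝ) ^ (-(m : ℝ)) := by
      have hnc : ((2 : ℝ) ^ ((m : ℕ) : ℝ)) = (2 : ℝ) ^ (m : ℕ) := Real.rpow_natCast 2 m
      rw [Real.rpow_neg (by norm_num : (0:ℝ) ≤ 2), hnc, one_div, inv_pow]
    have e2 : ((2 : ℝ) ^ (-(D : ℝ)⁻¹)) ^ i = (2 : ℝ) ^ (-((i : ℝ) / (D : ℝ))) := by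
      rw [← Real.rpow_natCast ((2 : ℝ) ^ (-(D : ℝ)⁻¹)) i,
        ← Real.rpow_mul (by norm_num : (0:ℝ) ≤ 2)]
      congr 1
      field_simp
    have e3 : (4 : ℝ) = (2 : ℝ) ^ (2 : ℝ) := by
      have : ((2 : ℝ) ^ ((2 : ℕ) : ℝ)) = (2 : ℝ) ^ (2 : ℕ) := Real.rpow_natCast 2 2
      rw [show ((2 : ℕ) : ℝ) = (2 : ℝ) by norm_num] at this
      rw [this]
      norm_num
    rw [e1, e2, e3, ← Real.rpow_add (by norm_num : (0:ℝ) < 2)]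
    apply Real.rpow_le_rpow_of_exponent_le one_le_two
    have hDpos' : (0 : ℝ) < (D : ℝ) := by exact_mod_cast hDpos
    have hiD : (i : ℝ) ≤ (D : ℝ) * (m : ℝ) + 2 * (D : ℝ) := by
      exact_mod_cast hnat2
    have hdiv : (i : ℝ) / (D : ℝ) ≤ (m : ℝ) + 2 := by
      rw [div_le_iff₀ hDpos']
      linarith
    linarith
  have hfin : Lf i ≤ 4 * ((2 : ℝ) ^ (-(D : ℝ)⁻¹)) ^ i * Lf 1 := by
    calc Lf i ≤ (1 / 2 : ℝ) ^ m * Lf 1 := hLi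
      _ ≤ (4 * ((2 : ℝ) ^ (-(D : ℝ)⁻¹)) ^ i) * Lf 1 :=
        mul_le_mul_of_nonneg_right hpow hL1.le
      _ = 4 * ((2 : ℝ) ^ (-(D : ℝ)⁻¹)) ^ i * Lf 1 := by ring
  rw [hLf i, hLf 1] at hfin
  exact hfin
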